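/- For all integers n and t with 0 < t < n − 1, the single-exclusion number satisfies the recurrence inequality S(n,t) ≤ S(n−1, t−1) + T(n−1, t+1, t). -/

import Mathlib

/-- An `(n,t)`-single-exclusion system: a collection of `t`-subsets (blocks) of an
`n`-set such that every subset `X` with `1 ≤ |X| ≤ t+1` has a block containing all
but exactly one element of `X`. -/
def IsSESystem (n t : ℕ) (S : Finset (Finset (Fin n))) : Prop :=
  (∀ B ∈ S, B.card = t) ∧
  ∀ X : Finset (Fin n), 1 ≤ X.card → X.card ≤ t + 1 → ∃ B ∈ S, (X \ B).card = 1

/-- The `(n,t)`-single-exclusion number `S(n,t)`: the least number of blocks in an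
`(n,t)`-single-exclusion system. -/
noncomputable def SENumber (n t : ℕ) : ℕ :=
  sInf {m : ℕ | ∃ S : Finset (Finset (Fin n)), IsSESystem n t S ∧ S.card = m}
/-- An `(n,s,t)`-Turán system: a collection of `t`-subsets (blocks) of an `n`-set
such that every `s`-subset contains at least one block. -/
def IsTuranSystem (n s t : ℕ) (T : Finset (Finset (Fin n))) : Prop :=
  (∀ B ∈ T, B.card = t) ∧
  ∀ X : Finset (Fin n), X.card = s → ∃ B ∈ T, B ⊆ X

/-- The `(n,s,t)`-Turán number `T(n,s,t)`: the least number of blocks in an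
`(n,s,t)`-Turán system. -/
noncomputable def turanNumber (n s t : ℕ) : ℕ :=
  sInf {m : ℕ | ∃ T : Finset (Finset (Fin n)), IsTuranSystem n s t T ∧ T.card = m}

lemma exists_SE (m t : ℕ) (h : t + 1 ≤ m) : ∃ S, IsSESystem m t S := by
  refine ⟨Finset.powersetCard t Finset.univ, fun B hB => (Finset.mem_powersetCard.mp hB).2, ?_⟩
  intro X hX1 hX2
  obtain ⟨x, hx⟩ := Finset.card_pos.mp hX1
  have hsub : X.erase x ⊆ Finset.univ.erase x := fun y hy =>
    Finset.mem_erase.mpr ⟨(Finset.mem_erase.mp hy).1, Finset.mem_univ y⟩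
  have hc1 : (X.erase x).card ≤ t := by
    rw [Finset.card_erase_of_mem hx]; omega
  have hc2 : t ≤ (Finset.univ.erase x : Finset (Fin m)).card := by
    rw [Finset.card_erase_of_mem (Finset.mem_univ x), Finset.card_univ, Fintype.card_fin]; omega
  obtain ⟨B, hXB, hBu, hBc⟩ := Finset.exists_subsuperset_card_eq hsub hc1 hc2
  refine ⟨B, Finset.mem_powersetCard.mpr ⟨Finset.subset_univ B, hBc⟩, ?_⟩
  have : X \ B = {x} := by
    ext y
    simp only [Finset.mem_sdiff, Finset.mem_singleton]
    constructor
    · rintro ⟨hy, hyB⟩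
      by_contra hne
      exact hyB (hXB (Finset.mem_erase.mpr ⟨hne, hy⟩))
    · rintro rfl
      exact ⟨hx, fun hxB => (Finset.mem_erase.mp (hBu hxB)).1 rfl⟩
  rw [this, Finset.card_singleton]

lemma exists_Turan (m s t : ℕ) (h : t ≤ s) : ∃ T, IsTuranSystem m s t T := by
  refine ⟨Finset.powersetCard t Finset.univ, fun B hB => (Finset.mem_powersetCard.mp hB).2, ?_⟩
  intro X hX
  obtain ⟨B, hBX, hBc⟩ := Finset.exists_subset_card_eq (show t ≤ X.card by omega)
  exact ⟨B, Finset.mem_powersetCard.mpr ⟨Finset.subset_univ B, hBc⟩, hBX⟩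

theorem stmt7 (n t : ℕ) (ht : 0 < t) (htn : t + 1 < n) :
    SENumber n t ≤ SENumber (n - 1) (t - 1) + turanNumber (n - 1) (t + 1) t := by
  classical
  obtain ⟨m, rfl⟩ : ∃ m, n = m + 1 := ⟨n - 1, by omega⟩
  have hmm : (m + 1 : ℕ) - 1 = m := rfl
  rw [hmm]
  -- obtain optimal SE system on m points
  have hSEne : {k : ℕ | ∃ S : Finset (Finset (Fin m)), IsSESystem m (t-1) S ∧ S.card = k}.Nonempty := by
    obtain ⟨S, hS⟩ := exists_SE m (t-1) (by omega)
    exact ⟨S.card, S, hS, rfl⟩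
  obtain ⟨S, hS, hScard⟩ := Nat.sInf_mem hSEne
  have hTne : {k : ℕ | ∃ T : Finset (Finset (Fin m)), IsTuranSystem m (t+1) t T ∧ T.card = k}.Nonempty := by
    obtain ⟨T, hT⟩ := exists_Turan m (t+1) t (by omega)
    exact ⟨T.card, T, hT, rfl⟩
  obtain ⟨T, hT, hTcard⟩ := Nat.sInf_mem hTne
  set e : Fin m → Fin (m+1) := Fin.castSucc with he
  have hei : Function.Injective e := Fin.castSucc_injective m
  have hlast : ∀ (B : Finset (Fin m)), Fin.last m ∉ B.image e := by
    intro B hmem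
    obtain ⟨x, _, hx⟩ := Finset.mem_image.mp hmem
    exact (Fin.castSucc_lt_last x).ne hx
  set U : Finset (Finset (Fin (m+1))) :=
    S.image (fun B => insert (Fin.last m) (B.image e)) ∪ T.image (fun B => B.image e) with hU
  -- T is nonempty
  have hTnonempty : T.Nonempty := by
    obtain ⟨Z, _, hZc⟩ := Finset.exists_subset_card_eq
      (show t + 1 ≤ (Finset.univ : Finset (Fin m)).card by
        rw [Finset.card_univ, Fintype.card_fin]; omega)
    obtain ⟨B, hB, _⟩ := hT.2 Z hZc
    exact ⟨B, hB⟩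
  have hUse : IsSESystem (m+1) t U := by
    constructor
    · intro B hB
      rcases Finset.mem_union.mp hB with hB | hB
      · obtain ⟨C, hC, rfl⟩ := Finset.mem_image.mp hB
        rw [Finset.card_insert_of_notMem (hlast C), Finset.card_image_of_injective _ hei,
          hS.1 C hC]
        omega
      · obtain ⟨C, hC, rfl⟩ := Finset.mem_image.mp hB
        rw [Finset.card_image_of_injective _ hei, hT.1 C hC]
    · intro X hX1 hX2
      set Y : Finset (Fin m) := Finset.univ.filter (fun x => e x ∈ X) with hY
      have hYimg : Y.image e = X.erase (Fin.last m) := by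
        ext y
        simp only [Finset.mem_image, hY, Finset.mem_filter, Finset.mem_univ, true_and,
          Finset.mem_erase]
        constructor
        · rintro ⟨x, hx, rfl⟩
          exact ⟨(Fin.castSucc_lt_last x).ne, hx⟩
        · rintro ⟨hne, hy⟩
          obtain ⟨x, rfl⟩ := Fin.exists_castSucc_eq.mpr hne
          exact ⟨x, hy, rfl⟩
      have hYcard : Y.card = (X.erase (Fin.last m)).card := by
        rw [← hYimg, Finset.card_image_of_injective _ hei]
      have hYle : Y.card ≤ X.card := hYcard ▸ Finset.card_le_card (Finset.erase_subset _ _)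
      rcases Nat.lt_or_ge Y.card 1 with hY0 | hY1
      · -- X = {last}
        have hYe : Y = ∅ := Finset.card_eq_zero.mp (by omega)
        have hXl : X = {Fin.last m} := by
          have herase : X.erase (Fin.last m) = ∅ := by
            rw [← hYimg, hYe, Finset.image_empty]
          have : X ⊆ {Fin.last m} := by
            intro y hy
            by_contra hne
            have : y ∈ X.erase (Fin.last m) :=
              Finset.mem_erase.mpr ⟨by simpa using hne, hy⟩
            simp [herase] at this
          rcases Finset.subset_singleton_iff.mp this with h | h
          · exfalso; rw [h] at hX1; simp at hX1
          · exact h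
        obtain ⟨B, hB⟩ := hTnonempty
        refine ⟨B.image e, Finset.mem_union_right _ (Finset.mem_image_of_mem _ hB), ?_⟩
        have : X \ B.image e = {Fin.last m} := by
          rw [hXl]
          rw [Finset.sdiff_eq_self_iff_disjoint]
          exact Finset.disjoint_singleton_left.mpr (hlast B)
        rw [this, Finset.card_singleton]
      · rcases Nat.lt_or_ge Y.card (t+1) with hYt | hYt
        · -- use SE system
          obtain ⟨B, hB, hBc⟩ := hS.2 Y hY1 (by omega)
          refine ⟨insert (Fin.last m) (B.image e),
            Finset.mem_union_left _ (Finset.mem_image_of_mem _ hB), ?_⟩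
          have hsd : X \ insert (Fin.last m) (B.image e) = (Y \ B).image e := by
            ext y
            simp only [Finset.mem_sdiff, Finset.mem_insert, Finset.mem_image, hY,
              Finset.mem_filter, Finset.mem_univ, true_and, not_or]
            constructor
            · rintro ⟨hy, hne, hnB⟩
              obtain ⟨x, rfl⟩ := Fin.exists_castSucc_eq.mpr hne
              exact ⟨x, ⟨hy, fun hxB => hnB ⟨x, hxB, rfl⟩⟩, rfl⟩
            · rintro ⟨x, ⟨hx, hxB⟩, rfl⟩
              refine ⟨hx, (Fin.castSucc_lt_last x).ne, ?_⟩
              rintro ⟨z, hz, hez⟩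
              exact hxB (by rwa [hei hez] at hz)
          rw [hsd, Finset.card_image_of_injective _ hei, hBc]
        · -- Y.card = t+1, last ∉ X, use Turan
          have hYc : Y.card = t + 1 := by omega
          have hlX : Fin.last m ∉ X := by
            intro hl
            have := Finset.card_erase_of_mem hl
            omega
          have hXY : X = Y.image e := by
            rw [hYimg, Finset.erase_eq_of_notMem hlX]
          obtain ⟨B, hB, hBY⟩ := hT.2 Y hYc
          refine ⟨B.image e, Finset.mem_union_right _ (Finset.mem_image_of_mem _ hB), ?_⟩
          have hsub : B.image e ⊆ X := hXY ▸ Finset.image_subset_image hBY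
          rw [Finset.card_sdiff_of_subset hsub, Finset.card_image_of_injective _ hei, hT.1 B hB, hXY,
            Finset.card_image_of_injective _ hei, hYc]
          omega
      -- end cases
  have hmem : U.card ∈ {k : ℕ | ∃ S : Finset (Finset (Fin (m+1))), IsSESystem (m+1) t S ∧ S.card = k} :=
    ⟨U, hUse, rfl⟩
  calc SENumber (m+1) t ≤ U.card := Nat.sInf_le hmem
    _ ≤ S.card + T.card := le_trans (Finset.card_union_le _ _)
        (Nat.add_le_add (Finset.card_image_le) (Finset.card_image_le))
    _ = SENumber m (t-1) + turanNumber m (t+1) t := by rw [hScard, hTcard]; rfl
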